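/- Let Λ be a (non-zero) σ-finite, translation-invariant measure on the space of hyperplanes in ℝ^ℓ, and for a set W ⊆ ℝ^ℓ let [W] denote the set of hyperplanes meeting W. Then for every window W (compact convex polytope with nonempty interior) and every c > 0, Λ([cW]) = c·Λ([W]). -/

import Mathlib

open MeasureTheory Pointwise
open scoped ENNReal NNReal

/-- The space of (parametrized) affine hyperplanes in `ℝ^ℓ`: a unit normal
vector together with a signed distance. -/
def HypSpace (ℓ : ℕ) := Metric.sphere (0 : EuclideanSpace ℝ (Fin ℓ)) 1 × ℝ

instance (ℓ : ℕ) : MeasurableSpace (HypSpace ℓ) :=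
  inferInstanceAs (MeasurableSpace (Metric.sphere (0 : EuclideanSpace ℝ (Fin ℓ)) 1 × ℝ))

noncomputable instance (ℓ : ℕ) : TopologicalSpace (HypSpace ℓ) :=
  inferInstanceAs (TopologicalSpace (Metric.sphere (0 : EuclideanSpace ℝ (Fin ℓ)) 1 × ℝ))

/-- The hyperplane `{x : ⟪u, x⟫ = r}` associated to a parameter `(u, r)`. -/
noncomputable def hplane {ℓ : ℕ} (H : HypSpace ℓ) : Set (EuclideanSpace ℝ (Fin ℓ)) :=
  {x | inner (𝕜 := ℝ) (H.1 : EuclideanSpace ℝ (Fin ℓ)) x = H.2}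

/-- The translation by `x` acting on hyperplanes: `H ↦ H + x`. -/
noncomputable def hypTranslate {ℓ : ℕ} (x : EuclideanSpace ℝ (Fin ℓ)) (H : HypSpace ℓ) : HypSpace ℓ :=
  (H.1, H.2 + inner (𝕜 := ℝ) (H.1 : EuclideanSpace ℝ (Fin ℓ)) x)

/-- `[W]`: the set of hyperplanes meeting `W`. -/
def hitSet {ℓ : ℕ} (W : Set (EuclideanSpace ℝ (Fin ℓ))) : Set (HypSpace ℓ) :=
  {H | (hplane H ∩ W).Nonempty}

/-- The topological support of a measure on the hyperplane space. -/
def hypSupport {ℓ : ℕ} (Λ : Measure (HypSpace ℓ)) : Set (HypSpace ℓ) :=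
  {H | ∀ U : Set (HypSpace ℓ), IsOpen U → H ∈ U → 0 < Λ U}

namespace HypScaling

variable {ℓ : ℕ}

local notation "E" => EuclideanSpace ℝ (Fin ℓ)

instance : BorelSpace (HypSpace ℓ) :=
  inferInstanceAs (BorelSpace (Metric.sphere (0 : EuclideanSpace ℝ (Fin ℓ)) 1 × ℝ))

lemma norm_unit (u : Metric.sphere (0 : E) 1) : ‖(u : E)‖ = 1 :=
  norm_eq_of_mem_sphere u

lemma continuous_proj_sphere :
    Continuous fun H : HypSpace ℓ => (H.1 : E) :=
  continuous_subtype_val.comp (continuous_fst : Continuous (Prod.fst :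
    Metric.sphere (0 : E) 1 × ℝ → Metric.sphere (0 : E) 1))

lemma continuous_proj_r :
    Continuous fun H : HypSpace ℓ => H.2 :=
  (continuous_snd : Continuous (Prod.snd : Metric.sphere (0 : E) 1 × ℝ → ℝ))

lemma continuous_hypTranslate (x : E) : Continuous (hypTranslate (ℓ := ℓ) x) := by
  unfold hypTranslate
  exact Continuous.prodMk (continuous_fst)
    (continuous_proj_r.add (Continuous.inner continuous_proj_sphere continuous_const))

lemma measurable_hypTranslate (x : E) : Measurable (hypTranslate (ℓ := ℓ) x) :=
  (continuous_hypTranslate x).measurable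

/-- slab of parameter values -/
def slab (ℓ : ℕ) (ρ : ℝ) : Set (HypSpace ℓ) := {H : HypSpace ℓ | |H.2| ≤ ρ}

lemma isClosed_slab (ρ : ℝ) : IsClosed (slab ℓ ρ) :=
  isClosed_le (continuous_abs.comp continuous_proj_r) continuous_const

lemma measurableSet_slab (ρ : ℝ) : MeasurableSet (slab ℓ ρ) :=
  (isClosed_slab ρ).measurableSet

lemma mem_hitSet {W : Set (EuclideanSpace ℝ (Fin ℓ))} {H : HypSpace ℓ} :
    H ∈ hitSet W ↔ ∃ x ∈ W, inner (𝕜 := ℝ) (H.1 : E) x = H.2 := by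
  constructor
  · rintro ⟨x, hx1, hx2⟩; exact ⟨x, hx2, hx1⟩
  · rintro ⟨x, hx1, hx2⟩; exact ⟨x, hx2, hx1⟩

lemma hitSet_mono {W₁ W₂ : Set (EuclideanSpace ℝ (Fin ℓ))} (h : W₁ ⊆ W₂) :
    hitSet W₁ ⊆ hitSet W₂ := by
  intro H hH
  rcases mem_hitSet.mp hH with ⟨x, hx, hx2⟩
  exact mem_hitSet.mpr ⟨x, h hx, hx2⟩

lemma isClosed_hitSet {W : Set (EuclideanSpace ℝ (Fin ℓ))} (hW : IsCompact W) :
    IsClosed (hitSet W) := by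
  haveI : CompactSpace W := isCompact_iff_compactSpace.mp hW
  have hK : IsClosed {q : HypSpace ℓ × W |
      inner (𝕜 := ℝ) (q.1.1 : E) (q.2 : E) = q.1.2} := by
    apply isClosed_eq
    · exact Continuous.inner (continuous_proj_sphere.comp continuous_fst)
        (continuous_subtype_val.comp continuous_snd)
    · exact continuous_proj_r.comp continuous_fst
  have : hitSet W = Prod.fst '' {q : HypSpace ℓ × W |
      inner (𝕜 := ℝ) (q.1.1 : E) (q.2 : E) = q.1.2} := by
    ext H
    rw [mem_hitSet]
    constructor
    · rintro ⟨x, hx, hinner⟩; exact ⟨(H, ⟨x, hx⟩), hinner, rfl⟩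
    · rintro ⟨⟨H', x⟩, hq, rfl⟩; exact ⟨x, x.2, hq⟩
  rw [this]
  exact isClosedMap_fst_of_compactSpace _ hK

lemma measurableSet_hitSet {W : Set (EuclideanSpace ℝ (Fin ℓ))} (hW : IsCompact W) :
    MeasurableSet (hitSet W) := (isClosed_hitSet hW).measurableSet

lemma hitSet_subset_slab {W : Set (EuclideanSpace ℝ (Fin ℓ))} {ρ : ℝ}
    (hWρ : W ⊆ Metric.closedBall 0 ρ) : hitSet W ⊆ slab ℓ ρ := by
  intro H hH
  rcases mem_hitSet.mp hH with ⟨x, hx, hx2⟩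
  have hx' : ‖x‖ ≤ ρ := by simpa [Metric.mem_closedBall, dist_zero_right] using hWρ hx
  have : |H.2| ≤ ‖(H.1 : E)‖ * ‖x‖ := by
    rw [← hx2]; exact abs_real_inner_le_norm _ _
  rw [norm_unit, one_mul] at this
  exact this.trans hx'

lemma hitSet_closedBall (p : E) {ε : ℝ} (hε : 0 ≤ ε) :
    hitSet (Metric.closedBall p ε) = hypTranslate (-p) ⁻¹' slab ℓ ε := by
  ext H
  obtain ⟨u, r⟩ := H
  refine (mem_hitSet (H := ((u, r) : HypSpace ℓ))).trans ?_
  show (∃ x ∈ Metric.closedBall p ε, inner (𝕜 := ℝ) (u : E) x = r) ↔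
    |r + inner (𝕜 := ℝ) (u : E) (-p)| ≤ ε
  simp only [Set.mem_preimage, hypTranslate, slab, Set.mem_setOf_eq, inner_neg_right]
  constructor
  · rintro ⟨x, hx, hx2⟩
    have hx' : ‖x - p‖ ≤ ε := by
      simpa [Metric.mem_closedBall, dist_eq_norm] using hx
    have : r + -(inner (𝕜 := ℝ) (u : E) p) = inner (𝕜 := ℝ) (u : E) (x - p) := by
      rw [inner_sub_right, ← hx2]; ring
    rw [this]
    exact (abs_real_inner_le_norm _ _).trans (by rw [norm_unit, one_mul]; exact hx')
  · intro h
    refine ⟨p + (r - inner (𝕜 := ℝ) (u : E) p) • (u : E), ?_, ?_⟩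
    · rw [Metric.mem_closedBall, dist_eq_norm]
      have : p + (r - inner (𝕜 := ℝ) (u : E) p) • (u : E) - p
          = (r - inner (𝕜 := ℝ) (u : E) p) • (u : E) := by abel
      rw [this, norm_smul, norm_unit, mul_one]
      simpa [sub_eq_add_neg] using h
    · rw [inner_add_right, real_inner_smul_right, real_inner_self_eq_norm_sq, norm_unit]
      ring

lemma measure_hypTranslate_preimage (Λ : Measure (HypSpace ℓ))
    (hinv : ∀ x : E, Measure.map (hypTranslate x) Λ = Λ)
    (x : E) {B : Set (HypSpace ℓ)} (hB : MeasurableSet B) :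
    Λ (hypTranslate x ⁻¹' B) = Λ B := by
  conv_rhs => rw [← hinv x]
  rw [Measure.map_apply (measurable_hypTranslate x) hB]

lemma measure_hitSet_closedBall (Λ : Measure (HypSpace ℓ))
    (hinv : ∀ x : E, Measure.map (hypTranslate x) Λ = Λ)
    (p : E) {ε : ℝ} (hε : 0 ≤ ε) :
    Λ (hitSet (Metric.closedBall p ε)) = Λ (slab ℓ ε) := by
  rw [hitSet_closedBall p hε,
    measure_hypTranslate_preimage Λ hinv _ (measurableSet_slab ε)]

lemma slab_subset_hitSet_closedBall {ρ : ℝ} :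
    slab ℓ ρ ⊆ hitSet (Metric.closedBall (0 : E) ρ) := by
  rintro ⟨u, r⟩ h
  refine mem_hitSet.mpr ⟨r • (u : E), ?_, ?_⟩
  · rw [Metric.mem_closedBall, dist_zero_right, norm_smul, norm_unit, mul_one]
    exact h
  · rw [real_inner_smul_right, real_inner_self_eq_norm_sq, norm_unit]; ring

/-- covering lemma -/
lemma slab_le_slab (Λ : Measure (HypSpace ℓ))
    (hinv : ∀ x : E, Measure.map (hypTranslate x) Λ = Λ)
    (ρ : ℝ) {ε : ℝ} (hε : 0 < ε) :
    ∃ n : ℕ, Λ (slab ℓ ρ) ≤ n * Λ (slab ℓ ε) := by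
  have hcov : Metric.closedBall (0 : E) ρ ⊆
      ⋃ x ∈ Metric.closedBall (0 : E) ρ, Metric.ball x ε :=
    fun x hx => Set.mem_biUnion hx (Metric.mem_ball_self hε)
  obtain ⟨t, ht⟩ := (isCompact_closedBall (0 : E) ρ).elim_finite_subcover_image
    (fun x _ => Metric.isOpen_ball) hcov
  obtain ⟨ht1, ht2, ht3⟩ := ht
  refine ⟨ht2.toFinset.card, ?_⟩
  have hsub : slab ℓ ρ ⊆ ⋃ x ∈ ht2.toFinset, hitSet (Metric.closedBall x ε) := by
    refine slab_subset_hitSet_closedBall.trans ?_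
    refine (hitSet_mono ht3).trans ?_
    intro H hH
    rcases mem_hitSet.mp hH with ⟨x, hx, hx2⟩
    rcases Set.mem_iUnion₂.mp hx with ⟨p, hp, hxp⟩
    refine Set.mem_biUnion (ht2.mem_toFinset.mpr hp) ?_
    exact mem_hitSet.mpr ⟨x, Metric.ball_subset_closedBall hxp, hx2⟩
  calc Λ (slab ℓ ρ) ≤ Λ (⋃ x ∈ ht2.toFinset, hitSet (Metric.closedBall x ε)) :=
        measure_mono hsub
    _ ≤ ∑ x ∈ ht2.toFinset, Λ (hitSet (Metric.closedBall x ε)) :=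
        measure_biUnion_finset_le _ _
    _ = ∑ _x ∈ ht2.toFinset, Λ (slab ℓ ε) := by
        refine Finset.sum_congr rfl fun x _ => ?_
        exact measure_hitSet_closedBall Λ hinv x hε.le
    _ = ht2.toFinset.card * Λ (slab ℓ ε) := by
        rw [Finset.sum_const, nsmul_eq_mul]

lemma vol_affine_preimage (b : ℝ) {a : ℝ} (ha : a ≠ 0) {s : Set ℝ}
    (hs : MeasurableSet s) :
    volume ((fun t : ℝ => b - a * t) ⁻¹' s) = ENNReal.ofReal |a⁻¹| * volume s := by
  have h1 : (fun t : ℝ => b - a * t) = (fun y : ℝ => b - y) ∘ (fun t : ℝ => a * t) := rfl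
  rw [h1, Set.preimage_comp, Real.volume_preimage_mul_left ha]
  congr 1
  exact (Measure.measurePreserving_sub_left volume b).measure_preimage hs.nullMeasurableSet

lemma ennreal_squeeze {x y K : ℝ≥0∞} (hy : y ≠ ⊤) (hK : K ≠ ⊤)
    (h1 : ∀ T : ℝ, 1 ≤ T → ENNReal.ofReal T * x ≤ ENNReal.ofReal T * y + K) :
    x ≤ y := by
  refine ENNReal.le_of_forall_pos_le_add fun ε hε _ => ?_
  have hε' : (0:ℝ) < (ε:ℝ) := hε
  set T : ℝ := max 1 (K.toReal / (ε:ℝ)) with hT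
  have hT1 : (1:ℝ) ≤ T := le_max_left _ _
  have hTpos : (0:ℝ) < T := lt_of_lt_of_le one_pos hT1
  have hKle : K ≤ ENNReal.ofReal T * (ε : ℝ≥0∞) := by
    rw [← ENNReal.ofReal_toReal hK, ← ENNReal.ofReal_coe_nnreal,
      ← ENNReal.ofReal_mul hTpos.le]
    apply ENNReal.ofReal_le_ofReal
    have h2 : K.toReal / (ε:ℝ) ≤ T := le_max_right _ _
    calc K.toReal = (K.toReal / (ε:ℝ)) * (ε:ℝ) := by field_simp
      _ ≤ T * (ε:ℝ) := by nlinarith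
  have h3 : ENNReal.ofReal T * x ≤ ENNReal.ofReal T * (y + (ε:ℝ≥0∞)) := by
    calc ENNReal.ofReal T * x ≤ ENNReal.ofReal T * y + K := h1 T hT1
      _ ≤ ENNReal.ofReal T * y + ENNReal.ofReal T * (ε:ℝ≥0∞) := by gcongr
      _ = ENNReal.ofReal T * (y + (ε:ℝ≥0∞)) := by rw [mul_add]
  exact (ENNReal.mul_le_mul_iff_right (by simpa using hTpos) ENNReal.ofReal_ne_top).mp h3

/-- the flow of translations in direction `w`. -/
noncomputable def psi (w : EuclideanSpace ℝ (Fin ℓ)) (t : ℝ) (H : HypSpace ℓ) : HypSpace ℓ :=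
  (H.1, H.2 - t * inner (𝕜 := ℝ) (H.1 : E) w)

lemma psi_eq_translate (w : E) (t : ℝ) :
    psi (ℓ := ℓ) w t = hypTranslate ((-t) • w) := by
  funext H
  unfold psi hypTranslate
  rw [real_inner_smul_right]
  congr 1
  ring

lemma measurable_psi_uncurried (w : E) :
    Measurable fun p : ℝ × HypSpace ℓ => psi w p.1 p.2 := by
  apply Continuous.measurable
  unfold psi
  apply Continuous.prodMk
  · exact continuous_fst.comp continuous_snd
  · exact ((continuous_proj_r.comp continuous_snd)).sub
      (continuous_fst.mul ((Continuous.inner continuous_proj_sphere continuous_const).comp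
        continuous_snd))

lemma measurable_psi (w : E) (t : ℝ) : Measurable (psi (ℓ := ℓ) w t) := by
  rw [psi_eq_translate]; exact measurable_hypTranslate _

lemma measurable_timeSet (w : E) {B : Set (HypSpace ℓ)} (hB : MeasurableSet B)
    (H : HypSpace ℓ) : MeasurableSet {t : ℝ | psi w t H ∈ B} := by
  have h : Measurable fun t : ℝ => psi w t H :=
    (measurable_psi_uncurried w).comp (measurable_id.prodMk measurable_const)
  exact h hB

lemma int_eq (Λ : Measure (HypSpace ℓ)) (hσ : SigmaFinite Λ)
    (hinv : ∀ x : E, Measure.map (hypTranslate x) Λ = Λ)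
    (w : E) {B : Set (HypSpace ℓ)} (hB : MeasurableSet B) {T : ℝ} (hT : 0 ≤ T) :
    ∫⁻ H, volume ({t : ℝ | psi w t H ∈ B} ∩ Set.Icc 0 T) ∂Λ = ENNReal.ofReal T * Λ B := by
  haveI := hσ
  have hind : Measurable (B.indicator (1 : HypSpace ℓ → ℝ≥0∞)) :=
    measurable_one.indicator hB
  calc
    ∫⁻ H, volume ({t : ℝ | psi w t H ∈ B} ∩ Set.Icc 0 T) ∂Λ
        = ∫⁻ H, ∫⁻ t in Set.Icc (0:ℝ) T, B.indicator 1 (psi w t H) ∂volume ∂Λ := by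
      refine lintegral_congr fun H => ?_
      have h1 : ∀ t : ℝ, B.indicator (1 : HypSpace ℓ → ℝ≥0∞) (psi w t H)
          = Set.indicator {t' : ℝ | psi w t' H ∈ B} 1 t := by
        intro t
        by_cases h : psi w t H ∈ B
        · simp [Set.indicator_apply, Set.mem_setOf_eq, h]
        · simp [Set.indicator_apply, Set.mem_setOf_eq, h]
      simp_rw [h1]
      rw [lintegral_indicator_one (measurable_timeSet w hB H),
        Measure.restrict_apply' measurableSet_Icc]
    _ = ∫⁻ t in Set.Icc (0:ℝ) T, ∫⁻ H, B.indicator 1 (psi w t H) ∂Λ ∂volume := by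
      refine (lintegral_lintegral_swap ?_).symm
      exact (hind.comp (measurable_psi_uncurried w)).aemeasurable
    _ = ∫⁻ _t in Set.Icc (0:ℝ) T, Λ B ∂volume := by
      refine lintegral_congr fun t => ?_
      have h1 : ∀ H : HypSpace ℓ, B.indicator (1 : HypSpace ℓ → ℝ≥0∞) (psi w t H)
          = Set.indicator (psi w t ⁻¹' B) 1 H := by
        intro H
        by_cases h : psi w t H ∈ B
        · simp [Set.indicator_apply, Set.mem_preimage, h]
        · simp [Set.indicator_apply, Set.mem_preimage, h]
      simp_rw [h1]
      rw [lintegral_indicator_one ((measurable_psi w t) hB), psi_eq_translate,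
        measure_hypTranslate_preimage Λ hinv _ hB]
    _ = ENNReal.ofReal T * Λ B := by
      rw [setLIntegral_const, Real.volume_Icc, sub_zero, mul_comm]

set_option maxHeartbeats 1000000 in
lemma pointwise_bound {c : ℝ} (hc : 0 < c) {w : E} (hw : ‖w‖ = 1) {δ : ℝ} (hδ : 0 < δ)
    {R : ℝ} (hR : 0 ≤ R) {A A' : Set (HypSpace ℓ)} (hA : MeasurableSet A)
    (hAP : ∀ H ∈ A, δ ≤ inner (𝕜 := ℝ) (H.1 : E) w)
    (hAR : ∀ H ∈ A, |H.2| ≤ R)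
    (hA'iff : ∀ H : HypSpace ℓ, H ∈ A' ↔ ((H.1, H.2 / c) : HypSpace ℓ) ∈ A)
    {T : ℝ} (hT : 1 ≤ T) (u : Metric.sphere (0 : EuclideanSpace ℝ (Fin ℓ)) 1) (r : ℝ) :
    volume ({t : ℝ | psi w t ((u, r) : HypSpace ℓ) ∈ A'} ∩ Set.Icc 0 T)
        ≤ ENNReal.ofReal c * volume ({t : ℝ | psi w t ((u, r) : HypSpace ℓ) ∈ A} ∩ Set.Icc 0 T)
          + (slab ℓ ((c+1)*R+1) ∪ psi w T ⁻¹' slab ℓ ((c+1)*R+1)).indicator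
              (fun _ => ENNReal.ofReal (c * (2 * R / δ))) ((u, r) : HypSpace ℓ)
      ∧ ENNReal.ofReal c * volume ({t : ℝ | psi w t ((u, r) : HypSpace ℓ) ∈ A} ∩ Set.Icc 0 T)
        ≤ volume ({t : ℝ | psi w t ((u, r) : HypSpace ℓ) ∈ A'} ∩ Set.Icc 0 T)
          + (slab ℓ ((c+1)*R+1) ∪ psi w T ⁻¹' slab ℓ ((c+1)*R+1)).indicator
              (fun _ => ENNReal.ofReal (c * (2 * R / δ))) ((u, r) : HypSpace ℓ) := by
  set a : ℝ := inner (𝕜 := ℝ) (u : E) w with ha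
  have hpsi : ∀ t : ℝ, psi w t ((u, r) : HypSpace ℓ) = ((u, r - t * a) : HypSpace ℓ) :=
    fun t => rfl
  have hmemA : ∀ y : ℝ, ((u, y) : HypSpace ℓ) ∈ A → δ ≤ a ∧ |y| ≤ R :=
    fun y hy => ⟨hAP _ hy, hAR _ hy⟩
  have hmemA' : ∀ y : ℝ, ((u, y) : HypSpace ℓ) ∈ A' → δ ≤ a ∧ |y| ≤ c * R := by
    intro y hy
    have h1 := (hA'iff _).mp hy
    refine ⟨hAP _ h1, ?_⟩
    have h2 := hAR _ h1
    rw [show ((((u, y) : HypSpace ℓ).1, ((u, y) : HypSpace ℓ).2 / c) : HypSpace ℓ).2 = y / c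
      from rfl] at h2
    rw [abs_div, abs_of_pos hc, div_le_iff₀ hc] at h2
    linarith
  by_cases haδ : δ ≤ a
  swap
  · -- a < δ : both time sets are empty
    have hemptyA : {t : ℝ | psi w t ((u, r) : HypSpace ℓ) ∈ A} = ∅ := by
      ext t
      simp only [Set.mem_setOf_eq, Set.mem_empty_iff_false, iff_false]
      intro h
      rw [hpsi t] at h
      exact haδ (hmemA _ h).1
    have hemptyA' : {t : ℝ | psi w t ((u, r) : HypSpace ℓ) ∈ A'} = ∅ := by
      ext t
      simp only [Set.mem_setOf_eq, Set.mem_empty_iff_false, iff_false]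
      intro h
      rw [hpsi t] at h
      exact haδ (hmemA' _ h).1
    rw [hemptyA, hemptyA', Set.empty_inter, measure_empty]
    simp
  have ha0 : 0 < a := lt_of_lt_of_le hδ haδ
  have ha1 : a ≤ 1 := by
    have h1 := abs_real_inner_le_norm (u : E) w
    rw [norm_unit, hw, one_mul] at h1
    exact (le_abs_self a).trans h1
  by_cases hE : ((u, r) : HypSpace ℓ) ∈
      slab ℓ ((c+1)*R+1) ∪ psi w T ⁻¹' slab ℓ ((c+1)*R+1)
  · -- edge zone: bound both sides by the constant
    have hI : (slab ℓ ((c+1)*R+1) ∪ psi w T ⁻¹' slab ℓ ((c+1)*R+1)).indicator (fun _ => ENNReal.ofReal (c * (2 * R / δ))) ((u, r) : HypSpace ℓ) = ENNReal.ofReal (c * (2 * R / δ)) := Set.indicator_of_mem hE _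
    rw [hI]
    have hainv : a⁻¹ ≤ δ⁻¹ := by gcongr
    have hboundgen : ∀ (B : Set (HypSpace ℓ)) (ρ : ℝ), 0 ≤ ρ →
        (∀ y : ℝ, ((u, y) : HypSpace ℓ) ∈ B → |y| ≤ ρ) →
        volume ({t : ℝ | psi w t ((u, r) : HypSpace ℓ) ∈ B} ∩ Set.Icc 0 T)
          ≤ ENNReal.ofReal (a⁻¹ * (2 * ρ)) := by
      intro B ρ hρ hB
      have hsub : {t : ℝ | psi w t ((u, r) : HypSpace ℓ) ∈ B} ∩ Set.Icc 0 T
          ⊆ (fun t : ℝ => r - a * t) ⁻¹' Set.Icc (-ρ) ρ := by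
        rintro t ⟨ht, -⟩
        rw [Set.mem_setOf_eq, hpsi t] at ht
        have h2 := abs_le.mp (hB _ ht)
        simp only [Set.mem_preimage, Set.mem_Icc]
        constructor <;> nlinarith [h2.1, h2.2]
      calc volume ({t : ℝ | psi w t ((u, r) : HypSpace ℓ) ∈ B} ∩ Set.Icc 0 T)
          ≤ volume ((fun t : ℝ => r - a * t) ⁻¹' Set.Icc (-ρ) ρ) := measure_mono hsub
        _ = ENNReal.ofReal |a⁻¹| * volume (Set.Icc (-ρ) ρ) :=
            vol_affine_preimage r ha0.ne' measurableSet_Icc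
        _ = ENNReal.ofReal (a⁻¹ * (2 * ρ)) := by
            rw [Real.volume_Icc, abs_of_pos (inv_pos.mpr ha0),
              ← ENNReal.ofReal_mul (inv_pos.mpr ha0).le]
            congr 1; ring
    have hbA' : volume ({t : ℝ | psi w t ((u, r) : HypSpace ℓ) ∈ A'} ∩ Set.Icc 0 T)
        ≤ ENNReal.ofReal (c * (2 * R / δ)) := by
      refine (hboundgen A' (c * R) (by positivity) fun y hy => (hmemA' y hy).2).trans ?_
      apply ENNReal.ofReal_le_ofReal
      have h3 : (0:ℝ) ≤ 2 * c * R := by positivity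
      have h4 : a⁻¹ * (2 * (c * R)) = 2 * c * R * a⁻¹ := by ring
      have h5 : c * (2 * R / δ) = 2 * c * R * δ⁻¹ := by field_simp
      rw [h4, h5]
      gcongr
    have hbA : ENNReal.ofReal c *
        volume ({t : ℝ | psi w t ((u, r) : HypSpace ℓ) ∈ A} ∩ Set.Icc 0 T)
        ≤ ENNReal.ofReal (c * (2 * R / δ)) := by
      have h6 := hboundgen A R hR fun y hy => (hmemA y hy).2
      calc ENNReal.ofReal c *
          volume ({t : ℝ | psi w t ((u, r) : HypSpace ℓ) ∈ A} ∩ Set.Icc 0 T)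
          ≤ ENNReal.ofReal c * ENNReal.ofReal (a⁻¹ * (2 * R)) := by gcongr
        _ = ENNReal.ofReal (c * (a⁻¹ * (2 * R))) := (ENNReal.ofReal_mul hc.le).symm
        _ ≤ ENNReal.ofReal (c * (2 * R / δ)) := by
            apply ENNReal.ofReal_le_ofReal
            have h7 : c * (a⁻¹ * (2 * R)) = 2 * c * R * a⁻¹ := by ring
            have h8 : c * (2 * R / δ) = 2 * c * R * δ⁻¹ := by field_simp
            rw [h7, h8]
            have : (0:ℝ) ≤ 2 * c * R := by positivity
            gcongr
    exact ⟨hbA'.trans (self_le_add_left _ _), hbA.trans (self_le_add_left _ _)⟩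
  · -- far from the edges: exact scaling
    have hI0 : (slab ℓ ((c+1)*R+1) ∪ psi w T ⁻¹' slab ℓ ((c+1)*R+1)).indicator (fun _ => ENNReal.ofReal (c * (2 * R / δ))) ((u, r) : HypSpace ℓ) = 0 := Set.indicator_of_notMem hE _
    rw [hI0]
    replace hE := not_or.mp (show ¬ (((u, r) : HypSpace ℓ) ∈ slab ℓ ((c+1)*R+1) ∨
      ((u, r) : HypSpace ℓ) ∈ psi w T ⁻¹' slab ℓ ((c+1)*R+1)) from hE)
    obtain ⟨hE1, hE2⟩ := hE
    have hE1' : (c+1)*R+1 < |r| := by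
      by_contra h
      exact hE1 (not_lt.mp h)
    have hE2' : (c+1)*R+1 < |r - T * a| := by
      by_contra h
      apply hE2
      show |(psi w T ((u, r) : HypSpace ℓ)).2| ≤ (c+1)*R+1
      rw [hpsi T]
      exact not_lt.mp h
    have hRle : R ≤ (c+1)*R+1 := by nlinarith
    have hcRle : c * R ≤ (c+1)*R+1 := by nlinarith
    rcases lt_abs.mp hE1' with hr | hr
    · -- R₁ < r
      rcases lt_abs.mp hE2' with hr2 | hr2
      · -- R₁ < r - T*a : both empty
        have hemptyA : {t : ℝ | psi w t ((u, r) : HypSpace ℓ) ∈ A} ∩ Set.Icc 0 T = ∅ := by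
          ext t
          simp only [Set.mem_inter_iff, Set.mem_setOf_eq, Set.mem_Icc,
            Set.mem_empty_iff_false, iff_false, not_and]
          intro h1 h2 h3
          rw [hpsi t] at h1
          have h4 := abs_le.mp (hmemA _ h1).2
          exfalso
          nlinarith [h4.1, h4.2]
        have hemptyA' : {t : ℝ | psi w t ((u, r) : HypSpace ℓ) ∈ A'} ∩ Set.Icc 0 T = ∅ := by
          ext t
          simp only [Set.mem_inter_iff, Set.mem_setOf_eq, Set.mem_Icc,
            Set.mem_empty_iff_false, iff_false, not_and]
          intro h1 h2 h3
          rw [hpsi t] at h1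
          have h4 := abs_le.mp (hmemA' _ h1).2
          exfalso
          nlinarith [h4.1, h4.2]
        rw [hemptyA, hemptyA', measure_empty]
        simp
      · -- r - T*a < -R₁ : full windows
        have hfull : ∀ (B : Set (HypSpace ℓ)) (ρ : ℝ), 0 ≤ ρ → ρ ≤ (c+1)*R+1 →
            (∀ y : ℝ, ((u, y) : HypSpace ℓ) ∈ B → |y| ≤ ρ) →
            {t : ℝ | psi w t ((u, r) : HypSpace ℓ) ∈ B} ∩ Set.Icc 0 T
              = {t : ℝ | psi w t ((u, r) : HypSpace ℓ) ∈ B} := by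
          intro B ρ hρ hρ₁ hB
          apply Set.inter_eq_left.mpr
          intro t ht
          rw [Set.mem_setOf_eq, hpsi t] at ht
          have h3 := abs_le.mp (hB _ ht)
          have hta : 0 < t * a := by nlinarith [h3.1, h3.2]
          have htT : t * a < T * a := by nlinarith [h3.1, h3.2]
          constructor
          · nlinarith
          · nlinarith
        have hfullA := hfull A R hR hRle fun y hy => (hmemA y hy).2
        have hfullA' := hfull A' (c * R) (by positivity) hcRle fun y hy => (hmemA' y hy).2
        have hsA : MeasurableSet {y : ℝ | ((u, y) : HypSpace ℓ) ∈ A} := by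
          have hm : Measurable fun y : ℝ => ((u, y) : HypSpace ℓ) :=
            measurable_const.prodMk measurable_id
          exact hm hA
        have heqA : {t : ℝ | psi w t ((u, r) : HypSpace ℓ) ∈ A}
            = (fun t : ℝ => r - a * t) ⁻¹' {y : ℝ | ((u, y) : HypSpace ℓ) ∈ A} := by
          ext t
          simp only [Set.mem_setOf_eq, Set.mem_preimage, hpsi t]
          rw [mul_comm t a]
          exact Iff.rfl
        have heqA' : {t : ℝ | psi w t ((u, r) : HypSpace ℓ) ∈ A'}
            = (fun t : ℝ => r / c - (a / c) * t) ⁻¹' {y : ℝ | ((u, y) : HypSpace ℓ) ∈ A} := by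
          ext t
          simp only [Set.mem_setOf_eq, Set.mem_preimage, hpsi t]
          rw [hA'iff ((u, r - t * a) : HypSpace ℓ)]
          have h9 : (((((u, r - t * a) : HypSpace ℓ)).1,
              (((u, r - t * a) : HypSpace ℓ)).2 / c) : HypSpace ℓ)
              = ((u, r / c - (a / c) * t) : HypSpace ℓ) := by
            have : (r - t * a) / c = r / c - (a / c) * t := by
              field_simp
            rw [show ((((u, r - t * a) : HypSpace ℓ)).1 : Metric.sphere (0:E) 1) = u from rfl]
            rw [show (((u, r - t * a) : HypSpace ℓ)).2 = r - t * a from rfl]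
            rw [this]
          rw [h9]
        have hac : a / c ≠ 0 := (div_pos ha0 hc).ne'
        rw [hfullA, hfullA', heqA, heqA', vol_affine_preimage r ha0.ne' hsA,
          vol_affine_preimage (r / c) hac hsA]
        have hco : ENNReal.ofReal |(a / c)⁻¹| = ENNReal.ofReal c * ENNReal.ofReal |a⁻¹| := by
          rw [abs_of_pos (inv_pos.mpr (div_pos ha0 hc)), abs_of_pos (inv_pos.mpr ha0),
            ← ENNReal.ofReal_mul hc.le]
          congr 1
          field_simp
        rw [hco, add_zero, add_zero, mul_assoc]
        exact ⟨le_rfl, le_rfl⟩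
    · -- r < -R₁ : both empty
      have hemptyA : {t : ℝ | psi w t ((u, r) : HypSpace ℓ) ∈ A} ∩ Set.Icc 0 T = ∅ := by
        ext t
        simp only [Set.mem_inter_iff, Set.mem_setOf_eq, Set.mem_Icc,
          Set.mem_empty_iff_false, iff_false, not_and]
        intro h1 h2 h3
        rw [hpsi t] at h1
        have h4 := abs_le.mp (hmemA _ h1).2
        exfalso
        nlinarith [h4.1, h4.2]
      have hemptyA' : {t : ℝ | psi w t ((u, r) : HypSpace ℓ) ∈ A'} ∩ Set.Icc 0 T = ∅ := by
        ext t
        simp only [Set.mem_inter_iff, Set.mem_setOf_eq, Set.mem_Icc,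
          Set.mem_empty_iff_false, iff_false, not_and]
        intro h1 h2 h3
        rw [hpsi t] at h1
        have h4 := abs_le.mp (hmemA' _ h1).2
        exfalso
        nlinarith [h4.1, h4.2]
      rw [hemptyA, hemptyA', measure_empty]
      simp

set_option maxHeartbeats 1000000 in
lemma piece_scaling (Λ : Measure (HypSpace ℓ)) (hσ : SigmaFinite Λ)
    (hinv : ∀ x : E, Measure.map (hypTranslate x) Λ = Λ)
    (hfin : ∀ ρ : ℝ, Λ (slab ℓ ρ) ≠ ⊤)
    {c : ℝ} (hc : 0 < c) {w : E} (hw : ‖w‖ = 1) {δ : ℝ} (hδ : 0 < δ)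
    {R : ℝ} (hR : 0 ≤ R)
    {A A' : Set (HypSpace ℓ)} (hA : MeasurableSet A)
    (hAP : ∀ H ∈ A, δ ≤ inner (𝕜 := ℝ) (H.1 : E) w)
    (hAR : ∀ H ∈ A, |H.2| ≤ R)
    (hA'iff : ∀ H : HypSpace ℓ, H ∈ A' ↔ ((H.1, H.2 / c) : HypSpace ℓ) ∈ A) :
    Λ A' = ENNReal.ofReal c * Λ A := by
  haveI := hσ
  have hA'eq : A' = (fun H : HypSpace ℓ => ((H.1, H.2 / c) : HypSpace ℓ)) ⁻¹' A := by
    ext H; exact hA'iff H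
  have hmapm : Measurable fun H : HypSpace ℓ => ((H.1, H.2 / c) : HypSpace ℓ) := by
    apply Continuous.measurable
    exact Continuous.prodMk continuous_fst (continuous_proj_r.div_const c)
  have hA' : MeasurableSet A' := by rw [hA'eq]; exact hmapm hA
  have hAsub : A ⊆ slab ℓ R := fun H hH => hAR H hH
  have hA'sub : A' ⊆ slab ℓ (c * R) := by
    intro H hH
    have h2 : |H.2 / c| ≤ R := hAR _ ((hA'iff H).mp hH)
    rw [abs_div, abs_of_pos hc, div_le_iff₀ hc] at h2
    show |H.2| ≤ c * R
    linarith
  have hΛA : Λ A ≠ ⊤ := ne_top_of_le_ne_top (hfin R) (measure_mono hAsub)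
  have hΛA' : Λ A' ≠ ⊤ := ne_top_of_le_ne_top (hfin (c * R)) (measure_mono hA'sub)
  set K : ℝ≥0∞ := ENNReal.ofReal (c * (2 * R / δ)) * (2 * Λ (slab ℓ ((c+1)*R+1))) with hK
  have hKtop : K ≠ ⊤ :=
    ENNReal.mul_ne_top ENNReal.ofReal_ne_top (ENNReal.mul_ne_top (by simp) (hfin _))
  have main : ∀ T : ℝ, 1 ≤ T →
      ENNReal.ofReal T * Λ A' ≤ ENNReal.ofReal T * (ENNReal.ofReal c * Λ A) + K ∧
      ENNReal.ofReal T * (ENNReal.ofReal c * Λ A) ≤ ENNReal.ofReal T * Λ A' + K := by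
    intro T hT
    have hT0 : (0:ℝ) ≤ T := le_trans zero_le_one hT
    set Eset : Set (HypSpace ℓ) := slab ℓ ((c+1)*R+1) ∪ psi w T ⁻¹' slab ℓ ((c+1)*R+1)
      with hEdef
    have hEmeas : MeasurableSet Eset :=
      (measurableSet_slab _).union ((measurable_psi w T) (measurableSet_slab _))
    have hEΛ : Λ Eset ≤ 2 * Λ (slab ℓ ((c+1)*R+1)) := by
      refine (measure_union_le _ _).trans ?_
      rw [psi_eq_translate, measure_hypTranslate_preimage Λ hinv _ (measurableSet_slab _),
        two_mul]
    have hintA := int_eq Λ hσ hinv w hA hT0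
    have hintA' := int_eq Λ hσ hinv w hA' hT0
    have hptw1 : ∀ H : HypSpace ℓ,
        volume ({t : ℝ | psi w t H ∈ A'} ∩ Set.Icc 0 T)
          ≤ ENNReal.ofReal c * volume ({t : ℝ | psi w t H ∈ A} ∩ Set.Icc 0 T)
            + Eset.indicator (fun _ => ENNReal.ofReal (c * (2 * R / δ))) H := by
      intro H
      have h := (pointwise_bound hc hw hδ hR hA hAP hAR hA'iff hT H.1 H.2).1
      exact h
    have hptw2 : ∀ H : HypSpace ℓ,
        ENNReal.ofReal c * volume ({t : ℝ | psi w t H ∈ A} ∩ Set.Icc 0 T)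
          ≤ volume ({t : ℝ | psi w t H ∈ A'} ∩ Set.Icc 0 T)
            + Eset.indicator (fun _ => ENNReal.ofReal (c * (2 * R / δ))) H := by
      intro H
      have h := (pointwise_bound hc hw hδ hR hA hAP hAR hA'iff hT H.1 H.2).2
      exact h
    constructor
    · calc ENNReal.ofReal T * Λ A'
          = ∫⁻ H, volume ({t : ℝ | psi w t H ∈ A'} ∩ Set.Icc 0 T) ∂Λ := hintA'.symm
        _ ≤ ∫⁻ H, (ENNReal.ofReal c * volume ({t : ℝ | psi w t H ∈ A} ∩ Set.Icc 0 T)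
              + Eset.indicator (fun _ => ENNReal.ofReal (c * (2 * R / δ))) H) ∂Λ :=
            lintegral_mono hptw1
        _ = (∫⁻ H, ENNReal.ofReal c
                * volume ({t : ℝ | psi w t H ∈ A} ∩ Set.Icc 0 T) ∂Λ)
              + ENNReal.ofReal (c * (2 * R / δ)) * Λ Eset := by
            rw [lintegral_add_right _ (measurable_const.indicator hEmeas),
              lintegral_indicator_const hEmeas]
        _ = ENNReal.ofReal c * (ENNReal.ofReal T * Λ A)
              + ENNReal.ofReal (c * (2 * R / δ)) * Λ Eset := by
            rw [lintegral_const_mul' _ _ ENNReal.ofReal_ne_top, hintA]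
        _ ≤ ENNReal.ofReal T * (ENNReal.ofReal c * Λ A) + K := by
            rw [hK]
            exact add_le_add (le_of_eq (mul_left_comm _ _ _)) (mul_le_mul_right hEΛ _)
    · calc ENNReal.ofReal T * (ENNReal.ofReal c * Λ A)
          = ENNReal.ofReal c * (ENNReal.ofReal T * Λ A) := mul_left_comm _ _ _
        _ = ∫⁻ H, ENNReal.ofReal c
              * volume ({t : ℝ | psi w t H ∈ A} ∩ Set.Icc 0 T) ∂Λ := by
            rw [lintegral_const_mul' _ _ ENNReal.ofReal_ne_top, hintA]
        _ ≤ ∫⁻ H, (volume ({t : ℝ | psi w t H ∈ A'} ∩ Set.Icc 0 T)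
              + Eset.indicator (fun _ => ENNReal.ofReal (c * (2 * R / δ))) H) ∂Λ :=
            lintegral_mono hptw2
        _ = ENNReal.ofReal T * Λ A' + ENNReal.ofReal (c * (2 * R / δ)) * Λ Eset := by
            rw [lintegral_add_right _ (measurable_const.indicator hEmeas),
              lintegral_indicator_const hEmeas, hintA']
        _ ≤ ENNReal.ofReal T * Λ A' + K := by
            rw [hK]
            exact add_le_add le_rfl (mul_le_mul_right hEΛ _)
  have h1 : Λ A' ≤ ENNReal.ofReal c * Λ A :=
    ennreal_squeeze (ENNReal.mul_ne_top ENNReal.ofReal_ne_top hΛA) hKtop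
      (fun T hT => (main T hT).1)
  have h2 : ENNReal.ofReal c * Λ A ≤ Λ A' :=
    ennreal_squeeze hΛA' hKtop (fun T hT => (main T hT).2)
  exact le_antisymm h1 h2

lemma continuous_inner_fst (w : E) :
    Continuous fun H : HypSpace ℓ => inner (𝕜 := ℝ) (H.1 : E) w :=
  Continuous.inner continuous_proj_sphere continuous_const

lemma mem_hitSet_smul {W : Set (EuclideanSpace ℝ (Fin ℓ))} {c : ℝ} (hc : 0 < c)
    (H : HypSpace ℓ) :
    H ∈ hitSet (c • W) ↔ ((H.1, H.2 / c) : HypSpace ℓ) ∈ hitSet W := by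
  rw [mem_hitSet]
  refine Iff.trans ?_ (mem_hitSet (H := ((H.1, H.2 / c) : HypSpace ℓ))).symm
  constructor
  · rintro ⟨x, hx, hinner⟩
    rcases Set.mem_smul_set.mp hx with ⟨y, hy, rfl⟩
    refine ⟨y, hy, ?_⟩
    rw [real_inner_smul_right] at hinner
    show inner (𝕜 := ℝ) (H.1 : E) y = H.2 / c
    rw [← hinner]
    field_simp
  · rintro ⟨y, hy, hinner⟩
    refine ⟨c • y, Set.smul_mem_smul_set hy, ?_⟩
    rw [real_inner_smul_right]
    have h2 : inner (𝕜 := ℝ) (H.1 : E) y = H.2 / c := hinner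
    rw [h2]
    field_simp

/-- basis direction vectors used to chop the sphere into pieces -/
noncomputable def wvec (n : ℕ) : EuclideanSpace ℝ (Fin ℓ) :=
  if h : n < ℓ then EuclideanSpace.single (⟨n, h⟩ : Fin ℓ) (1:ℝ)
  else if h : n - ℓ < ℓ then -EuclideanSpace.single (⟨n - ℓ, h⟩ : Fin ℓ) (1:ℝ) else 0

lemma norm_wvec {n : ℕ} (h : n < 2 * ℓ) : ‖wvec (ℓ := ℓ) n‖ = 1 := by
  unfold wvec
  rcases lt_or_ge n ℓ with h1 | h1
  · rw [dif_pos h1, EuclideanSpace.norm_single]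
    norm_num
  · have h2 : n - ℓ < ℓ := by omega
    rw [dif_neg (not_lt.mpr h1), dif_pos h2, norm_neg, EuclideanSpace.norm_single]
    norm_num

lemma inner_single (u : EuclideanSpace ℝ (Fin ℓ)) (j : Fin ℓ) :
    inner (𝕜 := ℝ) u (EuclideanSpace.single j (1:ℝ)) = u j := by
  rw [EuclideanSpace.inner_single_right]
  simp

lemma exists_wvec (hℓ : 0 < ℓ) (u : Metric.sphere (0 : EuclideanSpace ℝ (Fin ℓ)) 1) :
    ∃ n : ℕ, (Real.sqrt ℓ)⁻¹ ≤ inner (𝕜 := ℝ) (u : E) (wvec (ℓ := ℓ) n) := by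
  set δ : ℝ := (Real.sqrt ℓ)⁻¹ with hδdef
  have hℓR : (0:ℝ) < (ℓ:ℝ) := by exact_mod_cast hℓ
  have hδpos : 0 < δ := inv_pos.mpr (Real.sqrt_pos.mpr hℓR)
  have hjex : ∃ j : Fin ℓ, δ ≤ |(u : E) j| := by
    by_contra hcon
    push_neg at hcon
    have hsum : ∑ j, ((u:E) j)^2 = 1 := by
      have h1 : ‖(u:E)‖ = 1 := norm_unit u
      have h2 := EuclideanSpace.norm_eq (u : E)
      rw [h1] at h2
      have h4 : ∑ j, ‖(u:E) j‖^2 = 1 := by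
        have h5 : (0:ℝ) ≤ ∑ j, ‖(u:E) j‖^2 :=
          Finset.sum_nonneg fun j _ => sq_nonneg _
        have h6 := Real.sq_sqrt h5
        rw [← h2] at h6
        simpa using h6.symm
      simpa [Real.norm_eq_abs, sq_abs] using h4
    haveI : Nonempty (Fin ℓ) := ⟨⟨0, hℓ⟩⟩
    have hlt : ∑ j, ((u:E) j)^2 < ∑ _j : Fin ℓ, δ^2 := by
      apply Finset.sum_lt_sum_of_nonempty Finset.univ_nonempty
      intro j _
      have h7 := hcon j
      nlinarith [abs_nonneg ((u:E) j), sq_abs ((u:E) j), abs_nonneg ((u:E) j)]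
    have hδsq : δ^2 = (ℓ:ℝ)⁻¹ := by
      rw [hδdef, inv_pow, Real.sq_sqrt hℓR.le]
    rw [hsum, Finset.sum_const, Finset.card_univ, Fintype.card_fin, nsmul_eq_mul, hδsq,
      mul_inv_cancel₀ hℓR.ne'] at hlt
    exact lt_irrefl _ hlt
  obtain ⟨j, hj⟩ := hjex
  rcases le_or_gt 0 ((u:E) j) with hpos | hneg
  · refine ⟨j.1, ?_⟩
    have hn : (j.1 : ℕ) < ℓ := j.2
    rw [show wvec (ℓ := ℓ) j.1 = EuclideanSpace.single (⟨j.1, hn⟩ : Fin ℓ) (1:ℝ) from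
      dif_pos hn]
    have hje : (⟨j.1, hn⟩ : Fin ℓ) = j := rfl
    rw [hje, inner_single]
    rwa [abs_of_nonneg hpos] at hj
  · refine ⟨j.1 + ℓ, ?_⟩
    have h1 : ¬ (j.1 + ℓ < ℓ) := by omega
    have h2 : j.1 + ℓ - ℓ < ℓ := by omega
    rw [show wvec (ℓ := ℓ) (j.1 + ℓ)
        = -EuclideanSpace.single (⟨j.1 + ℓ - ℓ, h2⟩ : Fin ℓ) (1:ℝ) from by
      rw [wvec, dif_neg h1, dif_pos h2]]
    rw [inner_neg_right]
    have h3 : (⟨j.1 + ℓ - ℓ, h2⟩ : Fin ℓ) = j := by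
      apply Fin.ext
      simp
    rw [h3, inner_single]
    rw [abs_of_neg hneg] at hj
    linarith

end HypScaling

/-- For a non-zero σ-finite translation-invariant measure `Λ` on the space of
hyperplanes of `ℝ^ℓ` (whose support is not contained in the hyperplanes parallel
to a fixed line), and every window `W` and `c > 0`: `Λ([cW]) = c · Λ([W])`. -/
theorem hyperplane_measure_scaling {ℓ : ℕ} (Λ : Measure (HypSpace ℓ))
    (hΛne : Λ ≠ 0) (hσ : SigmaFinite Λ)
    (hinv : ∀ x : EuclideanSpace ℝ (Fin ℓ), Measure.map (hypTranslate x) Λ = Λ)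
    (hsupp : ¬ ∃ v : EuclideanSpace ℝ (Fin ℓ), v ≠ 0 ∧
      ∀ H ∈ hypSupport Λ, inner (𝕜 := ℝ) (H.1 : EuclideanSpace ℝ (Fin ℓ)) v = 0)
    (W : Set (EuclideanSpace ℝ (Fin ℓ))) (hWc : IsCompact W) (hWconv : Convex ℝ W)
    (hWint : (interior W).Nonempty) (c : ℝ) (hc : 0 < c) :
    Λ (hitSet (c • W)) = ENNReal.ofReal c * Λ (hitSet W) := by
  classical
  rcases Nat.eq_zero_or_pos ℓ with hℓ0 | hℓpos
  · subst hℓ0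
    haveI hsph : IsEmpty (Metric.sphere (0 : EuclideanSpace ℝ (Fin 0)) 1) := by
      constructor
      rintro ⟨x, hx⟩
      have hx0 : x = 0 := Subsingleton.elim _ _
      rw [Metric.mem_sphere, hx0] at hx
      simp at hx
    haveI : IsEmpty (HypSpace 0) := ⟨fun H => IsEmpty.false H.1⟩
    rw [Set.eq_empty_of_isEmpty (hitSet (c • W)), Set.eq_empty_of_isEmpty (hitSet W),
      measure_empty, mul_zero]
  · obtain ⟨ρ₀, hρ₀⟩ := hWc.isBounded.subset_closedBall 0
    set R : ℝ := max ρ₀ 0 with hRdef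
    have hWR : W ⊆ Metric.closedBall 0 R :=
      hρ₀.trans (Metric.closedBall_subset_closedBall (le_max_left _ _))
    have hR : 0 ≤ R := le_max_right _ _
    obtain ⟨p, hp⟩ := hWint
    obtain ⟨ε₀, hε₀, hball⟩ := Metric.isOpen_iff.mp isOpen_interior p hp
    have hpball : Metric.closedBall p (ε₀/2) ⊆ W :=
      (Metric.closedBall_subset_ball (by linarith)).trans (hball.trans interior_subset)
    by_cases hfin : ∀ ρ' : ℝ, Λ (HypScaling.slab ℓ ρ') ≠ ⊤
    · -- finite case
      set δ : ℝ := (Real.sqrt ℓ)⁻¹ with hδdef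
      have hδ : 0 < δ :=
        inv_pos.mpr (Real.sqrt_pos.mpr (by exact_mod_cast hℓpos))
      set f : ℕ → Set (HypSpace ℓ) := fun n =>
        hitSet W ∩ {H : HypSpace ℓ |
          δ ≤ inner (𝕜 := ℝ) (H.1 : EuclideanSpace ℝ (Fin ℓ)) (HypScaling.wvec n)} with hf
      have hBmeas : ∀ n, MeasurableSet {H : HypSpace ℓ |
          δ ≤ inner (𝕜 := ℝ) (H.1 : EuclideanSpace ℝ (Fin ℓ)) (HypScaling.wvec n)} :=
        fun n => (isClosed_le continuous_const
          (HypScaling.continuous_inner_fst (HypScaling.wvec n))).measurableSet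
      have hfmeas : ∀ n, MeasurableSet (f n) :=
        fun n => (HypScaling.measurableSet_hitSet hWc).inter (hBmeas n)
      set D : ℕ → Set (HypSpace ℓ) := disjointed f with hD
      have hDmeas : ∀ n, MeasurableSet (D n) := MeasurableSet.disjointed hfmeas
      have hDdisj : Pairwise (Function.onFun Disjoint D) := disjoint_disjointed f
      have hcover : ⋃ n, f n = hitSet W := by
        apply Set.Subset.antisymm
        · exact Set.iUnion_subset fun n => Set.inter_subset_left
        · intro H hH
          obtain ⟨n, hn⟩ := HypScaling.exists_wvec hℓpos H.1
          exact Set.mem_iUnion.mpr ⟨n, hH, hn⟩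
      have hUD : ⋃ n, D n = hitSet W := by rw [hD, iUnion_disjointed, hcover]
      set σmap : HypSpace ℓ → HypSpace ℓ := fun H => ((H.1, H.2 / c) : HypSpace ℓ) with hσm
      set D' : ℕ → Set (HypSpace ℓ) := fun n => σmap ⁻¹' (D n) with hD'
      have hσmeas : Measurable σmap := by
        apply Continuous.measurable
        exact Continuous.prodMk continuous_fst (HypScaling.continuous_proj_r.div_const c)
      have hD'meas : ∀ n, MeasurableSet (D' n) := fun n => hσmeas (hDmeas n)
      have hD'disj : Pairwise (Function.onFun Disjoint D') := fun m n hmn => (hDdisj hmn).preimage σmap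
      have hUD' : ⋃ n, D' n = hitSet (c • W) := by
        rw [hD', ← Set.preimage_iUnion, hUD]
        ext H
        rw [Set.mem_preimage]
        exact (HypScaling.mem_hitSet_smul hc H).symm
      rw [← hUD', ← hUD, measure_iUnion hD'disj hD'meas, measure_iUnion hDdisj hDmeas,
        ← ENNReal.tsum_mul_left]
      apply tsum_congr
      intro n
      rcases lt_or_ge n (2*ℓ) with hn | hn
      · refine HypScaling.piece_scaling Λ hσ hinv hfin hc (HypScaling.norm_wvec hn) hδ hR
          (hDmeas n) ?_ ?_ ?_
        · intro H hH
          exact ((disjointed_subset f n) hH).2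
        · intro H hH
          have h1 : H ∈ hitSet W := ((disjointed_subset f n) hH).1
          exact HypScaling.hitSet_subset_slab hWR h1
        · intro H
          exact Iff.rfl
      · have hw0 : HypScaling.wvec (ℓ := ℓ) n = 0 := by
          rw [HypScaling.wvec, dif_neg (by omega), dif_neg (by omega)]
        have hfempty : f n = ∅ := by
          ext H
          simp only [hf, Set.mem_inter_iff, Set.mem_setOf_eq, hw0, inner_zero_right,
            Set.mem_empty_iff_false, iff_false, not_and]
          intro _
          exact not_le.mpr hδ
        have hDempty : D n = ∅ :=
          Set.subset_empty_iff.mp (hfempty ▸ disjointed_subset f n)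
        have hD'empty : D' n = ∅ := by
          show σmap ⁻¹' D n = ∅
          rw [hDempty, Set.preimage_empty]
        rw [hD'empty, hDempty, measure_empty, mul_zero]
    · -- infinite case
      push_neg at hfin
      obtain ⟨ρ₁, hρ₁⟩ := hfin
      have hslab_top : ∀ ε : ℝ, 0 < ε → Λ (HypScaling.slab ℓ ε) = ⊤ := by
        intro ε hε
        by_contra hne
        obtain ⟨n, hnle⟩ := HypScaling.slab_le_slab Λ hinv ρ₁ hε
        rw [hρ₁] at hnle
        exact ENNReal.mul_ne_top (ENNReal.natCast_ne_top n) hne (top_le_iff.mp hnle)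
      have hW_top : Λ (hitSet W) = ⊤ := by
        have h1 : Λ (hitSet (Metric.closedBall p (ε₀/2))) ≤ Λ (hitSet W) :=
          measure_mono (HypScaling.hitSet_mono hpball)
        rw [HypScaling.measure_hitSet_closedBall Λ hinv p (by linarith),
          hslab_top (ε₀/2) (by linarith)] at h1
        exact top_le_iff.mp h1
      have hW'_top : Λ (hitSet (c • W)) = ⊤ := by
        have hsub : Metric.closedBall (c • p) (c * (ε₀/2)) ⊆ c • W := by
          intro x hx
          refine ⟨c⁻¹ • x, ?_, ?_⟩
          · apply hpball
            rw [Metric.mem_closedBall, dist_eq_norm]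
            have h2 : c⁻¹ • x - p = c⁻¹ • (x - c • p) := by
              rw [smul_sub, smul_smul, inv_mul_cancel₀ hc.ne', one_smul]
            rw [h2, norm_smul, norm_inv, Real.norm_eq_abs, abs_of_pos hc]
            rw [Metric.mem_closedBall, dist_eq_norm] at hx
            calc c⁻¹ * ‖x - c • p‖ ≤ c⁻¹ * (c * (ε₀/2)) := by gcongr
              _ = ε₀/2 := by field_simp
          · show c • c⁻¹ • x = x
            rw [smul_smul, mul_inv_cancel₀ hc.ne', one_smul]
        have h1 : Λ (hitSet (Metric.closedBall (c • p) (c * (ε₀/2)))) ≤ Λ (hitSet (c • W)) :=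
          measure_mono (HypScaling.hitSet_mono hsub)
        rw [HypScaling.measure_hitSet_closedBall Λ hinv _ (by positivity),
          hslab_top (c * (ε₀/2)) (by positivity)] at h1
        exact top_le_iff.mp h1
      rw [hW_top, hW'_top, ENNReal.mul_top]
      intro h0
      rw [ENNReal.ofReal_eq_zero] at h0
      linarith
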